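/- Fix a, b ≥ 2 integers such that max(a,b) ≥ 3, and let A = { a^{n²} b^{m²} : n, m ∈ ℕ₀ }. Then FS(A) has density zero: (1/N)·#(FS(A) ∩ [1, N]) → 0 as N → ∞. In particular, A is not complete. -/

import Mathlib

/-- The finite sum set of `A`: all sums of nonempty finite subsets of `A`. -/
def FS (A : Set ℕ) : Set ℕ :=
  {n | ∃ F : Finset ℕ, ↑F ⊆ A ∧ F.Nonempty ∧ ∑ m ∈ F, m = n}

lemma count_le (a b N : ℕ) (ha : 2 ≤ a) (hb : 2 ≤ b) (hN : 1 ≤ N) :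
    (FS {x : ℕ | ∃ n m : ℕ, x = a ^ (n ^ 2) * b ^ (m ^ 2)} ∩ Set.Icc 1 N).ncard ≤
      2 ^ ((Nat.sqrt (Nat.log a N) + 1) * (Nat.sqrt (Nat.log b N) + 1)) := by
  set s := Nat.sqrt (Nat.log a N)
  set t := Nat.sqrt (Nat.log b N)
  set T : Finset ℕ := (Finset.range (s+1) ×ˢ Finset.range (t+1)).image
    (fun p => a ^ (p.1 ^ 2) * b ^ (p.2 ^ 2)) with hT
  set S : Finset ℕ := T.powerset.image (fun G => ∑ m ∈ G, m) with hS
  have hsub : FS {x : ℕ | ∃ n m : ℕ, x = a ^ (n ^ 2) * b ^ (m ^ 2)} ∩ Set.Icc 1 N ⊆ ↑S := by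
    rintro x ⟨⟨F, hFA, hFne, hsum⟩, hx1, hxN⟩
    have hFT : F ⊆ T := by
      intro y hy
      obtain ⟨n, m, rfl⟩ := hFA hy
      have hyle : a ^ (n ^ 2) * b ^ (m ^ 2) ≤ N := by
        calc a ^ (n ^ 2) * b ^ (m ^ 2) ≤ ∑ m ∈ F, m :=
              Finset.single_le_sum (fun i _ => Nat.zero_le i) hy
          _ = x := hsum
          _ ≤ N := hxN
      have hna : a ^ (n ^ 2) ≤ N :=
        le_trans (Nat.le_mul_of_pos_right _ (Nat.pow_pos (by omega))) hyle
      have hmb : b ^ (m ^ 2) ≤ N :=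
        le_trans (Nat.le_mul_of_pos_left _ (Nat.pow_pos (by omega))) hyle
      have hn : n ≤ s := by
        rw [Nat.le_sqrt]
        have := (Nat.le_log_iff_pow_le (by omega) (by omega)).mpr hna
        nlinarith [this]
      have hm : m ≤ t := by
        rw [Nat.le_sqrt]
        have := (Nat.le_log_iff_pow_le (by omega) (by omega)).mpr hmb
        nlinarith [this]
      simp only [hT, Finset.mem_image, Finset.mem_product, Finset.mem_range]
      exact ⟨(n, m), ⟨by omega, by omega⟩, rfl⟩
    simp only [hS, Finset.coe_image, Set.mem_image, Finset.mem_coe, Finset.mem_powerset]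
    exact ⟨F, hFT, hsum⟩
  calc (FS {x : ℕ | ∃ n m : ℕ, x = a ^ (n ^ 2) * b ^ (m ^ 2)} ∩ Set.Icc 1 N).ncard
      ≤ (↑S : Set ℕ).ncard := Set.ncard_le_ncard hsub S.finite_toSet
    _ = S.card := Set.ncard_coe_finset S
    _ ≤ T.powerset.card := Finset.card_image_le
    _ = 2 ^ T.card := Finset.card_powerset T
    _ ≤ 2 ^ ((s+1) * (t+1)) := by
        apply Nat.pow_le_pow_right (by norm_num)
        calc T.card ≤ _ := Finset.card_image_le
          _ = (s+1) * (t+1) := by simp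

lemma bound_real (a b N : ℕ) (ha : 2 ≤ a) (hb : 2 ≤ b) (hN : 1 ≤ N) :
    ((2:ℝ) ^ ((Nat.sqrt (Nat.log a N) + 1) * (Nat.sqrt (Nat.log b N) + 1))) / N ≤
      Real.exp ((Real.log 2 / Real.sqrt (Real.log a * Real.log b) - 1) * Real.log N
        + (2 * Real.sqrt (Real.log 2)) * Real.sqrt (Real.log N) + Real.log 2) := by
  set s := Nat.sqrt (Nat.log a N)
  set t := Nat.sqrt (Nat.log b N)
  set α := Real.log a with hα'
  set β := Real.log b with hβ'
  set L := Real.log N with hL'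
  have h2 : (0:ℝ) < Real.log 2 := Real.log_pos (by norm_num)
  have hα : Real.log 2 ≤ α := Real.log_le_log (by norm_num) (by exact_mod_cast ha)
  have hβ : Real.log 2 ≤ β := Real.log_le_log (by norm_num) (by exact_mod_cast hb)
  have hαpos : 0 < α := lt_of_lt_of_le h2 hα
  have hβpos : 0 < β := lt_of_lt_of_le h2 hβ
  have hL0 : 0 ≤ L := Real.log_natCast_nonneg N
  have hs : (s:ℝ) ≤ Real.sqrt (L / α) := by
    rw [Real.le_sqrt (by positivity) (by positivity)]
    have h1 : ((s:ℝ))^2 ≤ (Nat.log a N : ℝ) := by exact_mod_cast Nat.sqrt_le' (Nat.log a N)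
    have h2' : (Nat.log a N : ℝ) ≤ L / α := by
      have := Real.natLog_le_logb N a
      rwa [Real.logb] at this
    linarith
  have ht : (t:ℝ) ≤ Real.sqrt (L / β) := by
    rw [Real.le_sqrt (by positivity) (by positivity)]
    have h1 : ((t:ℝ))^2 ≤ (Nat.log b N : ℝ) := by exact_mod_cast Nat.sqrt_le' (Nat.log b N)
    have h2' : (Nat.log b N : ℝ) ≤ L / β := by
      have := Real.natLog_le_logb N b
      rwa [Real.logb] at this
    linarith
  set P := Real.sqrt (L / α)
  set Q := Real.sqrt (L / β)
  have hP0 : 0 ≤ P := Real.sqrt_nonneg _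
  have hQ0 : 0 ≤ Q := Real.sqrt_nonneg _
  have hPQ : P * Q = L / Real.sqrt (α * β) := by
    rw [show P * Q = Real.sqrt ((L/α) * (L/β)) by
      rw [Real.sqrt_mul (by positivity)]]
    rw [show (L/α) * (L/β) = L^2 / (α * β) by field_simp]
    rw [Real.sqrt_div (by positivity), Real.sqrt_sq hL0]
  have hPle : P ≤ Real.sqrt L / Real.sqrt (Real.log 2) := by
    rw [show P = Real.sqrt L / Real.sqrt α from Real.sqrt_div hL0 α]
    gcongr
  have hQle : Q ≤ Real.sqrt L / Real.sqrt (Real.log 2) := by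
    rw [show Q = Real.sqrt L / Real.sqrt β from Real.sqrt_div hL0 β]
    gcongr
  have hk : (((s + 1) * (t + 1) : ℕ) : ℝ) ≤
      L / Real.sqrt (α * β) + 2 * (Real.sqrt L / Real.sqrt (Real.log 2)) + 1 := by
    push_cast
    have hst : ((s:ℝ) + 1) * ((t:ℝ) + 1) ≤ (P + 1) * (Q + 1) := by
      have := s.cast_nonneg (α := ℝ)
      have := t.cast_nonneg (α := ℝ)
      nlinarith
    nlinarith [hPQ, hPle, hQle]
  -- rewrite LHS as exp
  have hNpos : (0:ℝ) < N := by exact_mod_cast hN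
  have hexp2 : ((2:ℝ) ^ ((s + 1) * (t + 1))) =
      Real.exp ((((s + 1) * (t + 1) : ℕ):ℝ) * Real.log 2) := by
    rw [← Real.log_pow, Real.exp_log (by positivity)]
  rw [hexp2, show (N:ℝ) = Real.exp L from (Real.exp_log hNpos).symm, ← Real.exp_sub]
  apply Real.exp_le_exp.mpr
  have h1 : (((s + 1) * (t + 1) : ℕ):ℝ) * Real.log 2 ≤
      (L / Real.sqrt (α * β) + 2 * (Real.sqrt L / Real.sqrt (Real.log 2)) + 1) * Real.log 2 :=
    mul_le_mul_of_nonneg_right hk h2.le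
  have key : (L / Real.sqrt (α*β) + 2*(Real.sqrt L/Real.sqrt (Real.log 2)) + 1) * Real.log 2
      = (Real.log 2 / Real.sqrt (α*β) - 1)*L
        + 2*(Real.log 2/Real.sqrt (Real.log 2))*Real.sqrt L + Real.log 2 + L := by ring
  rw [Real.div_sqrt] at key
  linarith

open Real Filter in
lemma g_atBot (θ c d : ℝ) (hθ : θ - 1 < 0) :
    Tendsto (fun x : ℝ => (θ - 1) * x + c * Real.sqrt x + d) atTop atBot := by
  have h1 : Tendsto (fun x : ℝ => ((θ - 1) + c / Real.sqrt x) * x) atTop atBot := by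
    apply Tendsto.neg_mul_atTop hθ ?_ tendsto_id
    simpa using tendsto_const_nhds.add
      (Tendsto.div_atTop (tendsto_const_nhds (x := c))
        (tendsto_atTop_atTop.mpr fun x => ⟨x ^ 2, fun _ h => Real.le_sqrt_of_sq_le h⟩))
  have h2 := tendsto_atBot_add_const_right atTop d h1
  apply h2.congr'
  filter_upwards [eventually_gt_atTop 0] with x hx
  have : c / Real.sqrt x * x = c * Real.sqrt x := by
    rw [div_mul_eq_mul_div, mul_div_assoc, Real.div_sqrt]
  nlinarith [this]

open Real Filter in
/-- For `a, b ≥ 2` with `max(a,b) ≥ 3`, the set `A = { a^{n²} b^{m²} }` has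
`FS(A)` of density zero; in particular `A` is not complete. -/
theorem stmt12 (a b : ℕ) (ha : 2 ≤ a) (hb : 2 ≤ b) (hab : 3 ≤ max a b) :
    Filter.Tendsto
      (fun N : ℕ =>
        ((FS {x : ℕ | ∃ n m : ℕ, x = a ^ (n ^ 2) * b ^ (m ^ 2)} ∩ Set.Icc 1 N).ncard : ℝ) / N)
      Filter.atTop (nhds 0) := by
  set θ := Real.log 2 / Real.sqrt (Real.log a * Real.log b) with hθ'
  have h2 : (0:ℝ) < Real.log 2 := Real.log_pos (by norm_num)
  have hα : Real.log 2 ≤ Real.log a := Real.log_le_log (by norm_num) (by exact_mod_cast ha)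
  have hβ : Real.log 2 ≤ Real.log b := Real.log_le_log (by norm_num) (by exact_mod_cast hb)
  have h3 : Real.log 2 < Real.log 3 := Real.log_lt_log (by norm_num) (by norm_num)
  have hprod : (Real.log 2)^2 < Real.log a * Real.log b := by
    rcases le_max_iff.mp hab with h | h
    · have h3a : Real.log 3 ≤ Real.log a := Real.log_le_log (by norm_num) (by exact_mod_cast h)
      nlinarith
    · have h3b : Real.log 3 ≤ Real.log b := Real.log_le_log (by norm_num) (by exact_mod_cast h)
      nlinarith
  have hsq : Real.log 2 < Real.sqrt (Real.log a * Real.log b) := by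
    have := Real.sqrt_lt_sqrt (by positivity) hprod
    rwa [Real.sqrt_sq h2.le] at this
  have hθ : θ - 1 < 0 := by
    have : θ < 1 := (div_lt_one (h2.trans hsq)).mpr hsq
    linarith
  have hbot := g_atBot θ (2 * Real.sqrt (Real.log 2)) (Real.log 2) hθ
  have hlog : Tendsto (fun N : ℕ => Real.log N) atTop atTop :=
    Real.tendsto_log_atTop.comp tendsto_natCast_atTop_atTop
  have hcomp : Tendsto (fun N : ℕ =>
      Real.exp ((θ - 1) * Real.log N + (2 * Real.sqrt (Real.log 2)) * Real.sqrt (Real.log N)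
        + Real.log 2)) atTop (nhds 0) :=
    Real.tendsto_exp_atBot.comp (hbot.comp hlog)
  apply squeeze_zero' ?_ ?_ hcomp
  · filter_upwards with N
    exact div_nonneg (Nat.cast_nonneg _) (Nat.cast_nonneg _)
  · filter_upwards [eventually_ge_atTop 1] with N hN
    have hc := count_le a b N ha hb hN
    have hNpos : (0:ℝ) < N := by exact_mod_cast hN
    calc ((FS {x : ℕ | ∃ n m : ℕ, x = a ^ (n ^ 2) * b ^ (m ^ 2)} ∩ Set.Icc 1 N).ncard : ℝ) / N
        ≤ ((2:ℝ) ^ ((Nat.sqrt (Nat.log a N) + 1) * (Nat.sqrt (Nat.log b N) + 1))) / N := by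
          gcongr
          exact_mod_cast hc
      _ ≤ _ := bound_real a b N ha hb hN
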